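/- (First-iterate guarantee, supermodular case) Let F be monotone supermodular with F(∅)=0 and supermodular curvature k^F < 1. Let τ₀ ∈ C, m the tight modular lower bound of F at τ₀ (m_τ₀(Y) = F(τ₀) - Σ_{j∈τ₀\Y} F(j|τ₀\{j}) + Σ_{j∈Y\τ₀} F({j})), and τ₁ ∈ C a maximizer of m over C. Then F(τ₁) ≥ ((k^F)² - 3k^F + 1)/(1 - k^F) · max_{τ ∈ C} F(τ). -/

import Mathlib

open Finset

def Supermodular {V : Type*} [DecidableEq V] (F : Finset V → ℝ) : Prop :=
  ∀ A B : Finset V, ∀ v : V, A ⊆ B → v ∉ B →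
    F (insert v A) - F A ≤ F (insert v B) - F B

def MonotoneSetFun {V : Type*} [DecidableEq V] (F : Finset V → ℝ) : Prop :=
  ∀ A B : Finset V, A ⊆ B → F A ≤ F B

/-- The tight modular lower bound of a supermodular `F` at `X`. -/
def supermodularLB {V : Type*} [Fintype V] [DecidableEq V]
    (F : Finset V → ℝ) (X Y : Finset V) : ℝ :=
  F X - ∑ j ∈ X \ Y, (F (insert j (X.erase j)) - F (X.erase j)) + ∑ j ∈ Y \ X, F {j}

/-- Superadditivity across a disjoint union. -/
lemma aux_superadd {V : Type*} [DecidableEq V] (F : Finset V → ℝ)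
    (hsup : Supermodular F) (h0 : F ∅ = 0) :
    ∀ D S : Finset V, Disjoint D S → F S + ∑ j ∈ D, F {j} ≤ F (S ∪ D) := by
  intro D
  induction D using Finset.induction_on with
  | empty => intro S _; simp
  | @insert j D hjD ih =>
    intro S hdisj
    have hjS : j ∉ S := Finset.disjoint_left.mp hdisj (mem_insert_self j D)
    have hdisj' : Disjoint D S := disjoint_of_subset_left (subset_insert j D) hdisj
    have hjSD : j ∉ S ∪ D := by simp [hjS, hjD]
    have h1 := hsup ∅ (S ∪ D) j (empty_subset _) hjSD
    rw [h0] at h1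
    have h1' : F {j} ≤ F (insert j (S ∪ D)) - F (S ∪ D) := by simpa using h1
    have h2 := ih S hdisj'
    have hU : S ∪ insert j D = insert j (S ∪ D) := Finset.union_insert j S D
    rw [Finset.sum_insert hjD, hU]
    linarith

lemma aux_lower {V : Type*} [DecidableEq V] (F : Finset V → ℝ)
    (hsup : Supermodular F) (h0 : F ∅ = 0) (S Y : Finset V) (hSY : S ⊆ Y) :
    F S + ∑ j ∈ Y \ S, F {j} ≤ F Y := by
  have := aux_superadd F hsup h0 (Y \ S) S sdiff_disjoint
  rwa [Finset.union_sdiff_of_subset hSY] at this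

lemma aux_upper {V : Type*} [Fintype V] [DecidableEq V] (F : Finset V → ℝ)
    (hsup : Supermodular F) :
    ∀ T : Finset V, F T - F ∅ ≤ ∑ j ∈ T, (F Finset.univ - F (Finset.univ.erase j)) := by
  intro T
  induction T using Finset.induction_on with
  | empty => simp
  | @insert j T hjT ih =>
    have hTsub : T ⊆ Finset.univ.erase j := fun x hx =>
      Finset.mem_erase.mpr ⟨fun h => hjT (h ▸ hx), mem_univ x⟩
    have h1 := hsup T (Finset.univ.erase j) j hTsub (notMem_erase j _)
    rw [Finset.insert_erase (mem_univ j)] at h1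
    rw [Finset.sum_insert hjT]
    linarith

lemma aux_removal {V : Type*} [DecidableEq V] (F : Finset V → ℝ)
    (hsup : Supermodular F) (X : Finset V) :
    ∀ T : Finset V, T ⊆ X →
      F X - ∑ j ∈ T, (F (insert j (X.erase j)) - F (X.erase j)) ≤ F (X \ T) := by
  intro T
  induction T using Finset.induction_on with
  | empty => simp
  | @insert j T hjT ih =>
    intro hsub
    have hjX : j ∈ X := hsub (mem_insert_self j T)
    have hTX : T ⊆ X := (subset_insert j T).trans hsub
    have hj2 : j ∈ X \ T := mem_sdiff.mpr ⟨hjX, hjT⟩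
    have hsub2 : (X \ T).erase j ⊆ X.erase j :=
      Finset.erase_subset_erase _ sdiff_subset
    have h1 := hsup ((X \ T).erase j) (X.erase j) j hsub2 (notMem_erase j X)
    rw [Finset.insert_erase hj2] at h1
    have hXins : X \ insert j T = (X \ T).erase j := by
      ext x; simp [mem_sdiff, mem_erase]; try tauto
    rw [Finset.sum_insert hjT, hXins]
    have h2 := ih hTX
    linarith

/-- First-iterate guarantee of GTO for monotone supermodular rewards. -/
theorem first_iterate_supermodular
    {V : Type*} [Fintype V] [DecidableEq V] [Nonempty V]
    (F : Finset V → ℝ) (hsup : Supermodular F) (hmono : MonotoneSetFun F)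
    (h0 : F ∅ = 0)
    (hpos : ∀ v : V, 0 < F univ - F (univ.erase v))
    (C : Finset (Finset V)) (τ₀ τ₁ : Finset V)
    (hτ₀ : τ₀ ∈ C) (hτ₁ : τ₁ ∈ C)
    (hmax : ∀ τ ∈ C, supermodularLB F τ₀ τ ≤ supermodularLB F τ₀ τ₁)
    (kF : ℝ)
    (hkF : kF = 1 - Finset.univ.inf' Finset.univ_nonempty
            (fun v : V => F {v} / (F univ - F (univ.erase v))))
    (hk1 : kF < 1) :
    ∀ τ ∈ C, ((kF ^ 2 - 3 * kF + 1) / (1 - kF)) * F τ ≤ F τ₁ := by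
  intro τ hτ
  set ρ : ℝ := Finset.univ.inf' Finset.univ_nonempty
      (fun v : V => F {v} / (F univ - F (univ.erase v))) with hρdef
  have hρpos : 0 < ρ := by
    rw [hkF] at hk1; linarith
  -- curvature bound for each element
  have hρle : ∀ v : V, ρ * (F univ - F (univ.erase v)) ≤ F {v} := by
    intro v
    have h := Finset.inf'_le (fun v : V => F {v} / (F univ - F (univ.erase v)))
      (mem_univ v)
    rw [← hρdef] at h
    exact (le_div_iff₀ (hpos v)).mp h
  -- each singleton ≤ its top marginal
  have hsing : ∀ v : V, F {v} ≤ F univ - F (univ.erase v) := by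
    intro v
    have h := hsup ∅ (univ.erase v) v (empty_subset _) (notMem_erase v _)
    rw [Finset.insert_erase (mem_univ v), h0] at h
    simpa using h
  have hρ1 : ρ ≤ 1 := by
    obtain ⟨v⟩ := (inferInstance : Nonempty V)
    have h := Finset.inf'_le (fun v : V => F {v} / (F univ - F (univ.erase v)))
      (mem_univ v)
    rw [← hρdef] at h
    exact h.trans ((div_le_one (hpos v)).mpr (hsing v))
  have hF0 : ∀ A : Finset V, 0 ≤ F A := fun A => h0 ▸ hmono ∅ A (empty_subset A)
  -- the modular bound is a lower bound of F
  have hmle : ∀ Y : Finset V, supermodularLB F τ₀ Y ≤ F Y := by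
    intro Y
    have h1 := aux_removal F hsup τ₀ (τ₀ \ Y) sdiff_subset
    rw [Finset.sdiff_sdiff_self_left] at h1
    have h2 := aux_lower F hsup h0 (τ₀ ∩ Y) Y inter_subset_right
    have hYd : Y \ (τ₀ ∩ Y) = Y \ τ₀ := by
      ext x; simp [mem_sdiff, mem_inter]; try tauto
    rw [hYd] at h2
    unfold supermodularLB
    linarith
  -- m(τ₀) = F τ₀ hence F τ₀ ≤ F τ₁
  have hm0 : supermodularLB F τ₀ τ₀ = F τ₀ := by
    unfold supermodularLB; simp
  have hτ₀τ₁ : F τ₀ ≤ F τ₁ := by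
    have := hmax τ₀ hτ₀
    rw [hm0] at this
    exact this.trans (hmle τ₁)
  -- notation for the key sums
  set A : ℝ := ∑ j ∈ τ, F {j} with hA
  set B : ℝ := ∑ j ∈ τ₀ \ τ, F {j} with hB
  set M : ℝ := ∑ j ∈ τ₀ \ τ, (F (insert j (τ₀.erase j)) - F (τ₀.erase j)) with hM
  -- (2) ρ * M ≤ B
  have h2 : ρ * M ≤ B := by
    rw [hM, hB, Finset.mul_sum]
    apply Finset.sum_le_sum
    intro j _
    have hmarg : F (insert j (τ₀.erase j)) - F (τ₀.erase j)
        ≤ F univ - F (univ.erase j) := by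
      have h := hsup (τ₀.erase j) (univ.erase j) j
        (Finset.erase_subset_erase _ (subset_univ τ₀)) (notMem_erase j _)
      rw [Finset.insert_erase (mem_univ j)] at h
      linarith
    calc ρ * (F (insert j (τ₀.erase j)) - F (τ₀.erase j))
        ≤ ρ * (F univ - F (univ.erase j)) :=
          mul_le_mul_of_nonneg_left hmarg hρpos.le
      _ ≤ F {j} := hρle j
  -- (3) B ≤ F τ₁
  have h3 : B ≤ F τ₁ := by
    have h := aux_lower F hsup h0 ∅ (τ₀ \ τ) (empty_subset _)
    rw [h0, Finset.sdiff_empty] at h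
    have := hmono (τ₀ \ τ) τ₀ sdiff_subset
    rw [hB]; linarith
  -- (4) ρ * F τ ≤ A
  have h4 : ρ * F τ ≤ A := by
    have hup := aux_upper F hsup τ
    rw [h0] at hup
    have hstep : ρ * (∑ j ∈ τ, (F univ - F (univ.erase j))) ≤ A := by
      rw [hA, Finset.mul_sum]
      exact Finset.sum_le_sum fun j _ => hρle j
    calc ρ * F τ ≤ ρ * (∑ j ∈ τ, (F univ - F (univ.erase j))) := by
          apply mul_le_mul_of_nonneg_left _ hρpos.le; linarith
      _ ≤ A := hstep
  -- (1) A + B - M ≤ F τ₁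
  have h1 : A + B - M ≤ F τ₁ := by
    -- m(τ) ≥ A + B - M
    have hsplit0 : ∑ j ∈ τ₀ \ (τ₀ ∩ τ), F {j} + ∑ j ∈ τ₀ ∩ τ, F {j}
        = ∑ j ∈ τ₀, F {j} := Finset.sum_sdiff inter_subset_left
    have he0 : τ₀ \ (τ₀ ∩ τ) = τ₀ \ τ := by
      ext x; simp [mem_sdiff, mem_inter]; try tauto
    rw [he0] at hsplit0
    have hsplitτ : ∑ j ∈ τ \ (τ₀ ∩ τ), F {j} + ∑ j ∈ τ₀ ∩ τ, F {j}
        = ∑ j ∈ τ, F {j} := by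
      have := Finset.sum_sdiff (f := fun j => F {j})
        (inter_subset_right : τ₀ ∩ τ ⊆ τ)
      exact this
    have heτ : τ \ (τ₀ ∩ τ) = τ \ τ₀ := by
      ext x; simp [mem_sdiff, mem_inter]; try tauto
    rw [heτ] at hsplitτ
    have hτ₀low : ∑ j ∈ τ₀, F {j} ≤ F τ₀ := by
      have h := aux_lower F hsup h0 ∅ τ₀ (empty_subset _)
      rw [h0, Finset.sdiff_empty] at h; linarith
    have hmτ : A + B - M ≤ supermodularLB F τ₀ τ := by
      unfold supermodularLB
      rw [hA, hB, hM]
      linarith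
    have := (hmax τ hτ).trans (hmle τ₁)
    linarith
  -- conclude F τ₁ ≥ ρ² * F τ
  have hkey : ρ ^ 2 * F τ ≤ F τ₁ := by
    nlinarith [mul_le_mul_of_nonneg_left h1 hρpos.le, h2, h3, h4, hρpos, hρ1,
      hF0 τ₁]
  rw [hkF]
  have hc : ((1 - ρ) ^ 2 - 3 * (1 - ρ) + 1) / (1 - (1 - ρ)) ≤ ρ ^ 2 := by
    rw [show (1 : ℝ) - (1 - ρ) = ρ by ring, div_le_iff₀ hρpos]
    nlinarith [sq_nonneg (ρ - 1), hρpos.le]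
  calc ((1 - ρ) ^ 2 - 3 * (1 - ρ) + 1) / (1 - (1 - ρ)) * F τ
      ≤ ρ ^ 2 * F τ := mul_le_mul_of_nonneg_right hc (hF0 τ)
    _ ≤ F τ₁ := hkey
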